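/- Let X be a Banach space and 0 < ε < 1/2. Given x ∈ B_X and x* ∈ S_{X*} with |1 - x*(x)| < ε²/2, there exist y ∈ S_X and y* ∈ S_{X*} such that y*(y) = 1, ‖y - x‖ < ε + ε², and ‖y* - x*‖ < ε. -/

import Mathlib

lemma bpb_ekeland (X : Type*) [NormedAddCommGroup X] [NormedSpace ℝ X] [CompleteSpace X]
    (f : X →L[ℝ] ℝ) (hf : ‖f‖ ≤ 1) (r : ℝ) (hr : 0 < r) (x : X) (hx : ‖x‖ ≤ 1) :
    ∃ y, ‖y‖ ≤ 1 ∧ f x + r * ‖y - x‖ ≤ f y ∧ ∀ z, ‖z‖ ≤ 1 → f z ≤ f y + r * ‖z - y‖ := by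
  classical
  set S : X → Set X := fun w => {z | ‖z‖ ≤ 1 ∧ f w + r * ‖z - w‖ ≤ f z} with hS
  have hmem_self : ∀ w, ‖w‖ ≤ 1 → w ∈ S w := by
    intro w hw; refine ⟨hw, by simp⟩
  have htrans : ∀ v w z, z ∈ S w → w ∈ S v → z ∈ S v := by
    intro v w z hz hw
    refine ⟨hz.1, ?_⟩
    have h1 : ‖z - v‖ ≤ ‖z - w‖ + ‖w - v‖ := norm_sub_le_norm_sub_add_norm_sub z w v
    nlinarith [hz.2, hw.2, hr]
  have hfle : ∀ z : X, ‖z‖ ≤ 1 → f z ≤ 1 := by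
    intro z hz
    calc f z ≤ |f z| := le_abs_self _
    _ ≤ ‖f‖ * ‖z‖ := f.le_opNorm z
    _ ≤ 1 := by nlinarith [norm_nonneg (f : X →L[ℝ] ℝ)]
  have hbdd : ∀ w, BddAbove (f '' S w) := by
    intro w
    refine ⟨1, ?_⟩
    rintro v ⟨z, hz, rfl⟩
    exact hfle z hz.1
  have hstep : ∀ (n : ℕ) (w : X), ∃ z, ‖w‖ ≤ 1 →
      z ∈ S w ∧ sSup (f '' S w) ≤ f z + (1/2)^n := by
    intro n w
    by_cases hw : ‖w‖ ≤ 1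
    · have hne : (f '' S w).Nonempty := ⟨f w, w, hmem_self w hw, rfl⟩
      have hlt : sSup (f '' S w) - (1/2)^n < sSup (f '' S w) := by
        have : (0:ℝ) < (1/2)^n := by positivity
        linarith
      obtain ⟨v, ⟨z, hz, rfl⟩, hv⟩ := exists_lt_of_lt_csSup hne hlt
      exact ⟨z, fun _ => ⟨hz, by linarith⟩⟩
    · exact ⟨w, fun h => absurd h hw⟩
  choose F hF using hstep
  set seq : ℕ → X := fun n => Nat.rec x (fun n w => F n w) n with hseq
  have hseq0 : seq 0 = x := rfl
  have hinv : ∀ n, ‖seq n‖ ≤ 1 := by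
    intro n
    induction n with
    | zero => exact hx
    | succ n ih => exact ((hF n (seq n)) ih).1.1
  have hstep' : ∀ n, seq (n+1) ∈ S (seq n) ∧
      sSup (f '' S (seq n)) ≤ f (seq (n+1)) + (1/2)^n :=
    fun n => hF n (seq n) (hinv n)
  have hchain : ∀ m n, m ≤ n → seq n ∈ S (seq m) := by
    intro m n hmn
    induction n with
    | zero => simpa [Nat.le_zero.mp hmn, hseq0] using hmem_self x hx
    | succ n ih =>
      rcases Nat.lt_or_ge m (n+1) with h' | h'
      · exact htrans _ _ _ (hstep' n).1 (ih (Nat.lt_succ_iff.mp h'))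
      · have : m = n + 1 := le_antisymm hmn h'
        subst this
        exact hmem_self (seq (n+1)) (hinv (n+1))
  have hamono : ∀ m n, m ≤ n → f (seq m) + r * ‖seq n - seq m‖ ≤ f (seq n) :=
    fun m n h => (hchain m n h).2
  have hbdda : BddAbove (Set.range fun n => f (seq n)) := by
    refine ⟨1, ?_⟩
    rintro v ⟨n, rfl⟩
    exact hfle _ (hinv n)
  set L : ℝ := ⨆ n, f (seq n) with hL
  have haleL : ∀ n, f (seq n) ≤ L := fun n => le_ciSup hbdda n
  have hmono' : Monotone fun n => f (seq n) := by
    intro m n h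
    have := hamono m n h
    nlinarith [norm_nonneg (seq n - seq m), hr]
  have htendsL : Filter.Tendsto (fun n => f (seq n)) Filter.atTop (nhds L) :=
    tendsto_atTop_ciSup hmono' hbdda
  have hcauchy : CauchySeq seq := by
    apply cauchySeq_of_le_tendsto_0 (fun n => (L - f (seq n)) / r)
    · intro n m N hNn hNm
      wlog hnm : m ≤ n generalizing n m
      · rw [dist_comm]; exact this m n hNm hNn (le_of_not_ge hnm)
      have h1 := hamono m n hnm
      have h2 : f (seq N) ≤ f (seq m) := hmono' hNm
      have h3 := haleL n
      rw [dist_eq_norm, le_div_iff₀ hr]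
      nlinarith
    · have h0 : Filter.Tendsto (fun n => (L - f (seq n))) Filter.atTop (nhds 0) := by
        have := htendsL.const_sub L
        simpa using this
      simpa using h0.div_const r
  obtain ⟨y, hy⟩ := cauchySeq_tendsto_of_complete hcauchy
  have hy1 : ‖y‖ ≤ 1 := by
    have : Filter.Tendsto (fun n => ‖seq n‖) Filter.atTop (nhds ‖y‖) :=
      (continuous_norm.continuousAt.tendsto.comp hy)
    exact le_of_tendsto this (Filter.Eventually.of_forall hinv)
  have hfy : Filter.Tendsto (fun n => f (seq n)) Filter.atTop (nhds (f y)) :=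
    (f.continuous.continuousAt.tendsto.comp hy)
  have hfyL : f y = L := tendsto_nhds_unique hfy htendsL
  have hyS : ∀ m, y ∈ S (seq m) := by
    intro m
    refine ⟨hy1, ?_⟩
    have htend : Filter.Tendsto (fun n => f (seq m) + r * ‖seq n - seq m‖)
        Filter.atTop (nhds (f (seq m) + r * ‖y - seq m‖)) := by
      have hsub : Filter.Tendsto (fun n => seq n - seq m) Filter.atTop (nhds (y - seq m)) :=
        hy.sub_const _
      exact (((continuous_norm.continuousAt.tendsto.comp hsub).const_mul r).const_add _)
    refine le_of_tendsto_of_tendsto htend hfy ?_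
    exact Filter.eventually_atTop.2 ⟨m, fun n hn => hamono m n hn⟩
  refine ⟨y, hy1, by simpa [hseq0] using (hyS 0).2, ?_⟩
  intro z hz
  by_contra hcon
  push_neg at hcon
  have hzS : ∀ n, z ∈ S (seq n) := fun n => htrans _ _ _ ⟨hz, hcon.le⟩ (hyS n)
  have hzle : ∀ n, f z ≤ L + (1/2)^n := by
    intro n
    have h1 : f z ≤ sSup (f '' S (seq n)) := le_csSup (hbdd _) ⟨z, hzS n, rfl⟩
    have h2 := (hstep' n).2
    have h3 := haleL (n+1)
    linarith
  have hfzL : f z ≤ L := by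
    by_contra hgt
    push_neg at hgt
    obtain ⟨n, hn⟩ := exists_pow_lt_of_lt_one (by linarith : (0:ℝ) < f z - L) (by norm_num : (1:ℝ)/2 < 1)
    have := hzle n
    linarith
  nlinarith [norm_nonneg (z - y), hr, hfyL]

lemma bpb_support (X : Type*) [NormedAddCommGroup X] [NormedSpace ℝ X]
    (f : X →L[ℝ] ℝ) (β : ℝ) (hβ : 0 < β) (y : X)
    (hy3 : ∀ z, ‖z‖ ≤ 1 → f z ≤ f y + β * ‖z - y‖) :
    ∃ h : X →L[ℝ] ℝ, ‖h‖ ≤ β ∧ ∀ z, ‖z‖ ≤ 1 → f z + h z ≤ f y + h y := by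
  classical
  set C : Set X := {w | ∃ t : ℝ, 0 ≤ t ∧ ∃ z, ‖z‖ ≤ 1 ∧ w = t • (z - y)} with hC
  have hC0 : (0 : X) ∈ C := ⟨0, le_refl _, 0, by simp, by simp⟩
  have hCmem : ∀ z, ‖z‖ ≤ 1 → z - y ∈ C := fun z hz => ⟨1, zero_le_one, z, hz, (one_smul ℝ _).symm⟩
  have hfC : ∀ w ∈ C, f w ≤ β * ‖w‖ := by
    rintro w ⟨t, ht, z, hz, rfl⟩
    have h1 : f (z - y) ≤ β * ‖z - y‖ := by
      have := hy3 z hz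
      rw [map_sub]; linarith
    rw [map_smul, norm_smul, Real.norm_eq_abs, abs_of_nonneg ht, smul_eq_mul]
    nlinarith
  have hC_smul : ∀ (c : ℝ), 0 ≤ c → ∀ w ∈ C, c • w ∈ C := by
    rintro c hc w ⟨t, ht, z, hz, rfl⟩
    exact ⟨c * t, mul_nonneg hc ht, z, hz, by rw [smul_smul]⟩
  have hC_add : ∀ w₁ ∈ C, ∀ w₂ ∈ C, w₁ + w₂ ∈ C := by
    rintro w₁ ⟨t₁, ht₁, z₁, hz₁, rfl⟩ w₂ ⟨t₂, ht₂, z₂, hz₂, rfl⟩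
    rcases eq_or_lt_of_le (add_nonneg ht₁ ht₂) with h0 | h0
    · have e1 : t₁ = 0 := by linarith
      have e2 : t₂ = 0 := by linarith
      simpa [e1, e2] using hC0
    · set t := t₁ + t₂ with htdef
      refine ⟨t, h0.le, t⁻¹ • (t₁ • z₁ + t₂ • z₂), ?_, ?_⟩
      · rw [norm_smul, Real.norm_eq_abs, abs_of_nonneg (inv_nonneg.2 h0.le)]
        have : ‖t₁ • z₁ + t₂ • z₂‖ ≤ t := by
          calc ‖t₁ • z₁ + t₂ • z₂‖ ≤ ‖t₁ • z₁‖ + ‖t₂ • z₂‖ := norm_add_le _ _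
          _ = t₁ * ‖z₁‖ + t₂ * ‖z₂‖ := by
              rw [norm_smul, norm_smul, Real.norm_eq_abs, Real.norm_eq_abs,
                abs_of_nonneg ht₁, abs_of_nonneg ht₂]
          _ ≤ t := by nlinarith
        calc t⁻¹ * ‖t₁ • z₁ + t₂ • z₂‖ ≤ t⁻¹ * t := by
              exact mul_le_mul_of_nonneg_left this (inv_nonneg.2 h0.le)
        _ = 1 := inv_mul_cancel₀ h0.ne'
      · have e2 : t • (t⁻¹ • (t₁ • z₁ + t₂ • z₂) - y) = t₁ • (z₁ - y) + t₂ • (z₂ - y) := by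
          rw [smul_sub, smul_smul, mul_inv_cancel₀ h0.ne', one_smul, htdef, add_smul,
            smul_sub, smul_sub]
          abel
        rw [e2]
  set T : X → Set ℝ := fun u => {v | ∃ w ∈ C, v = β * ‖u - w‖ - f w} with hT
  have hTne : ∀ u, (T u).Nonempty := fun u => ⟨β * ‖u‖, 0, hC0, by simp⟩
  have hTlb : ∀ u, ∀ v ∈ T u, -(β * ‖u‖) ≤ v := by
    rintro u _ ⟨w, hw, rfl⟩
    have h1 := hfC w hw
    have h2 : ‖w‖ ≤ ‖u - w‖ + ‖u‖ := by
      have e : w = u - (u - w) := by abel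
      calc ‖w‖ = ‖u - (u - w)‖ := by rw [← e]
      _ ≤ ‖u‖ + ‖u - w‖ := norm_sub_le _ _
      _ = ‖u - w‖ + ‖u‖ := add_comm _ _
    nlinarith [norm_nonneg (u - w)]
  have hTbdd : ∀ u, BddBelow (T u) := fun u => ⟨-(β * ‖u‖), hTlb u⟩
  set p : X → ℝ := fun u => sInf (T u) with hp
  have hple : ∀ u, ∀ w ∈ C, p u ≤ β * ‖u - w‖ - f w :=
    fun u w hw => csInf_le (hTbdd u) ⟨w, hw, rfl⟩
  have hpub : ∀ u, p u ≤ β * ‖u‖ := fun u => by simpa using hple u 0 hC0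
  have hplb : ∀ u, -(β * ‖u‖) ≤ p u := fun u => le_csInf (hTne u) (hTlb u)
  have N_add : ∀ u₁ u₂, p (u₁ + u₂) ≤ p u₁ + p u₂ := by
    intro u₁ u₂
    have key : ∀ v₁ ∈ T u₁, ∀ v₂ ∈ T u₂, p (u₁ + u₂) ≤ v₁ + v₂ := by
      rintro _ ⟨w₁, h₁, rfl⟩ _ ⟨w₂, h₂, rfl⟩
      refine le_trans (hple _ _ (hC_add _ h₁ _ h₂)) ?_
      have e : (u₁ + u₂) - (w₁ + w₂) = (u₁ - w₁) + (u₂ - w₂) := by abel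
      rw [e, map_add]
      have := norm_add_le (u₁ - w₁) (u₂ - w₂)
      nlinarith
    have step : ∀ v₁ ∈ T u₁, p (u₁ + u₂) - v₁ ≤ p u₂ := by
      intro v₁ h₁
      exact le_csInf (hTne u₂) fun v₂ h₂ => by linarith [key v₁ h₁ v₂ h₂]
    have : p (u₁ + u₂) - p u₂ ≤ p u₁ :=
      le_csInf (hTne u₁) fun v₁ h₁ => by linarith [step v₁ h₁]
    linarith
  have N_hom : ∀ (c : ℝ), 0 < c → ∀ u, p (c • u) = c * p u := by
    intro c hc u
    have le₁ : p (c • u) ≤ c * p u := by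
      have : ∀ v ∈ T u, p (c • u) ≤ c * v := by
        rintro _ ⟨w, hw, rfl⟩
        have := hple (c • u) (c • w) (hC_smul c hc.le w hw)
        rw [← smul_sub, norm_smul, Real.norm_eq_abs, abs_of_nonneg hc.le, map_smul,
          smul_eq_mul] at this
        nlinarith
      have : ∀ v ∈ T u, p (c • u) / c ≤ v := fun v hv => (div_le_iff₀' hc).2 (this v hv)
      have h2 : p (c • u) / c ≤ p u := le_csInf (hTne u) this
      calc p (c • u) = c * (p (c • u) / c) := by field_simp
      _ ≤ c * p u := mul_le_mul_of_nonneg_left h2 hc.le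
    have le₂ : c * p u ≤ p (c • u) := by
      refine le_csInf (hTne _) ?_
      rintro _ ⟨w, hw, rfl⟩
      have hw' : c⁻¹ • w ∈ C := hC_smul c⁻¹ (inv_nonneg.2 hc.le) w hw
      have h1 := hple u (c⁻¹ • w) hw'
      have e : c • (u - c⁻¹ • w) = c • u - w := by
        rw [smul_sub, smul_smul, mul_inv_cancel₀ hc.ne', one_smul]
      have e2 : ‖c • u - w‖ = c * ‖u - c⁻¹ • w‖ := by
        rw [← e, norm_smul, Real.norm_eq_abs, abs_of_nonneg hc.le]
      have e3 : f w = c * f (c⁻¹ • w) := by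
        rw [map_smul, smul_eq_mul, ← mul_assoc, mul_inv_cancel₀ hc.ne', one_mul]
      rw [e2, e3]
      nlinarith
    linarith
  obtain ⟨g, -, hg⟩ := exists_extension_of_le_sublinear ⟨⊥, 0⟩ p N_hom N_add
    (fun x => by
      have hx0 : (x : X) = 0 := (Submodule.mem_bot ℝ).1 x.2
      have : (0:ℝ) ≤ p (x : X) := by
        have := hplb (x : X)
        rw [hx0] at this ⊢
        simpa using this
      simpa using this)
  have hgb : ∀ u, ‖g u‖ ≤ β * ‖u‖ := by
    intro u
    rw [Real.norm_eq_abs, abs_le]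
    constructor
    · have := (hg (-u)).trans (hpub (-u))
      rw [map_neg] at this
      rw [norm_neg] at this
      linarith
    · exact (hg u).trans (hpub u)
  set h : X →L[ℝ] ℝ := LinearMap.mkContinuous g β hgb with hh
  refine ⟨h, LinearMap.mkContinuous_norm_le g hβ.le hgb, ?_⟩
  intro z hz
  have h1 : g (z - y) ≤ -f (z - y) := by
    have := (hg (z - y)).trans (hple (z - y) (z - y) (hCmem z hz))
    simpa using this
  have h2 : h z - h y ≤ f y - f z := by
    have e : h z - h y = g (z - y) := by
      simp [hh, LinearMap.mkContinuous_apply, map_sub]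
    rw [map_sub] at h1
    rw [e, map_sub]
    rw [map_sub] at h1
    linarith
  linarith



set_option maxHeartbeats 1000000 in
/-- Bishop-Phelps-Bollobás theorem. -/
theorem stmt0 (X : Type*) [NormedAddCommGroup X] [NormedSpace ℝ X] [CompleteSpace X]
    (ε : ℝ) (hε : 0 < ε) (hε2 : ε < 1 / 2)
    (x : X) (hx : ‖x‖ ≤ 1) (f : X →L[ℝ] ℝ) (hf : ‖f‖ = 1)
    (h : |1 - f x| < ε ^ 2 / 2) :
    ∃ (y : X) (g : X →L[ℝ] ℝ), ‖y‖ = 1 ∧ ‖g‖ = 1 ∧ g y = 1 ∧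
      ‖y - x‖ < ε + ε ^ 2 ∧ ‖g - f‖ < ε := by
  obtain ⟨β, hβdef⟩ : ∃ β : ℝ, β = ε/2 - ε^2/4 - ε^3/16 := ⟨_, rfl⟩
  have hεsq : ε * ε < 1/4 := by nlinarith
  have hβpos : 0 < β := by
    rw [hβdef]
    nlinarith [mul_pos hε (show (0:ℝ) < 8 - 4*ε - ε^2 by nlinarith)]
  have hβsmall : β < 1/4 := by
    rw [hβdef]
    nlinarith [pow_pos hε 3, sq_nonneg ε]
  have cond1 : ε^2/2 < β * (ε + ε^2) := by
    rw [hβdef]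
    nlinarith [mul_pos (pow_pos hε 3) (show (0:ℝ) < 4 - 5*ε - ε^2 by nlinarith)]
  have cond2 : 2*β + ε^2/2 < ε := by
    rw [hβdef]
    nlinarith [pow_pos hε 3]
  have hfx : 1 - ε^2/2 < f x := by
    have h1 := (abs_lt.1 h).2
    linarith
  obtain ⟨y, hy1, hy2, hy3⟩ := bpb_ekeland X f hf.le β hβpos x hx
  have hfy1 : f y ≤ 1 := by
    calc f y ≤ |f y| := le_abs_self _
    _ ≤ ‖f‖ * ‖y‖ := f.le_opNorm y
    _ ≤ 1 := by rw [hf]; linarith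
  have hfyx : f x ≤ f y := by nlinarith [norm_nonneg (y - x)]
  have hfylb : 1 - ε^2/2 < f y := lt_of_lt_of_le hfx hfyx
  have hfybig : 7/8 < f y := by nlinarith
  -- distance bound
  have hyx : ‖y - x‖ < ε + ε^2 := by
    have h3 : β * ‖y - x‖ < β * (ε + ε^2) := by linarith
    exact (mul_lt_mul_iff_right₀ hβpos).1 h3
  -- y is on the sphere
  have hymax : ‖y‖ = 1 := by
    by_contra hne
    have hlt : ‖y‖ < 1 := lt_of_le_of_ne hy1 hne
    have hy0 : y ≠ 0 := by
      intro h0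
      rw [h0, map_zero] at hfybig
      norm_num at hfybig
    have hn0 : 0 < ‖y‖ := norm_pos_iff.2 hy0
    have hz : ‖(‖y‖⁻¹ • y)‖ ≤ 1 := by
      rw [norm_smul, Real.norm_eq_abs, abs_of_nonneg (inv_nonneg.2 hn0.le),
        inv_mul_cancel₀ hn0.ne']
    have h4 := hy3 _ hz
    rw [map_smul, smul_eq_mul] at h4
    have e : ‖(‖y‖⁻¹ • y) - y‖ = 1 - ‖y‖ := by
      have e1 : (‖y‖⁻¹ • y) - y = (‖y‖⁻¹ - 1) • y := by rw [sub_smul, one_smul]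
      have e2 : (0:ℝ) ≤ ‖y‖⁻¹ - 1 := by
        have : (1:ℝ) ≤ ‖y‖⁻¹ := (one_le_inv₀ hn0).2 hy1
        linarith
      rw [e1, norm_smul, Real.norm_eq_abs, abs_of_nonneg e2, sub_mul, one_mul,
        inv_mul_cancel₀ hn0.ne']
    rw [e] at h4
    have h5 : f y ≤ ‖y‖ * (f y + β * (1 - ‖y‖)) := by
      have h6 := mul_le_mul_of_nonneg_left h4 hn0.le
      rwa [← mul_assoc, mul_inv_cancel₀ hn0.ne', one_mul] at h6
    nlinarith [mul_pos (sub_pos.2 hlt) (show (0:ℝ) < f y - β by linarith),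
      mul_nonneg hβpos.le (sq_nonneg (1 - ‖y‖))]
  -- support functional
  obtain ⟨k, hk, hksup⟩ := bpb_support X f β hβpos y hy3
  obtain ⟨Λ, hΛdef⟩ : ∃ L : X →L[ℝ] ℝ, L = f + k := ⟨_, rfl⟩
  have hΛapp : ∀ z : X, Λ z = f z + k z := by
    intro z; rw [hΛdef]; rfl
  have hky : |k y| ≤ β := by
    calc |k y| ≤ ‖k‖ * ‖y‖ := k.le_opNorm y
    _ ≤ β := by rw [hymax]; linarith
  have hΛylb : f y - β ≤ Λ y := by
    rw [hΛapp]
    have := (abs_le.1 hky).1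
    linarith
  have hΛyub : Λ y ≤ 1 + β := by
    rw [hΛapp]
    have := (abs_le.1 hky).2
    linarith
  have hΛypos : 0 < Λ y := by linarith
  have hΛsup : ∀ z, ‖z‖ ≤ 1 → Λ z ≤ Λ y := by
    intro z hz
    rw [hΛapp, hΛapp]
    exact hksup z hz
  have hΛnorm : ‖Λ‖ = Λ y := by
    refine le_antisymm (Λ.opNorm_le_bound hΛypos.le ?_) ?_
    · intro u
      rcases eq_or_ne u 0 with rfl | hu
      · simp
      have hc : 0 < ‖u‖ := norm_pos_iff.2 hu
      have h1 : ‖(‖u‖⁻¹ • u)‖ ≤ 1 := by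
        rw [norm_smul, Real.norm_eq_abs, abs_of_nonneg (inv_nonneg.2 hc.le),
          inv_mul_cancel₀ hc.ne']
      have h2 : ‖(-(‖u‖⁻¹ • u))‖ ≤ 1 := by rwa [norm_neg]
      have h3 := hΛsup _ h1
      have h4 := hΛsup _ h2
      rw [map_neg] at h4
      rw [map_smul, smul_eq_mul] at h3 h4
      have h5 : |‖u‖⁻¹ * Λ u| ≤ Λ y := abs_le.2 ⟨by linarith, h3⟩
      rw [abs_mul, abs_of_nonneg (inv_nonneg.2 hc.le)] at h5
      rw [Real.norm_eq_abs]
      calc |Λ u| = ‖u‖ * (‖u‖⁻¹ * |Λ u|) := by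
            rw [← mul_assoc, mul_inv_cancel₀ hc.ne', one_mul]
      _ ≤ ‖u‖ * Λ y := mul_le_mul_of_nonneg_left h5 hc.le
      _ = Λ y * ‖u‖ := mul_comm _ _
    · calc Λ y ≤ |Λ y| := le_abs_self _
      _ ≤ ‖Λ‖ * ‖y‖ := Λ.le_opNorm y
      _ = ‖Λ‖ := by rw [hymax, mul_one]
  obtain ⟨G, hGdef⟩ : ∃ G : X →L[ℝ] ℝ, G = (Λ y)⁻¹ • Λ := ⟨_, rfl⟩
  have hGy : G y = 1 := by
    rw [hGdef]
    simp only [ContinuousLinearMap.coe_smul', Pi.smul_apply, smul_eq_mul]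
    exact inv_mul_cancel₀ hΛypos.ne'
  have hGnorm : ‖G‖ = 1 := by
    have e : ‖G‖ = ‖(Λ y)⁻¹‖ * ‖Λ‖ := by rw [hGdef]; exact norm_smul ((Λ y)⁻¹) Λ
    rw [e, Real.norm_eq_abs, abs_of_nonneg (inv_nonneg.2 hΛypos.le), hΛnorm,
      inv_mul_cancel₀ hΛypos.ne']
  have hΛf : Λ - f = k := by
    rw [hΛdef]; abel
  have hGΛ : ‖G - Λ‖ = |1 - Λ y| := by
    have e1 : G - Λ = ((Λ y)⁻¹ - 1) • Λ := by
      rw [hGdef]; ext z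
      simp only [ContinuousLinearMap.sub_apply, ContinuousLinearMap.coe_smul', Pi.smul_apply, smul_eq_mul]; ring
    have e2 : ‖G - Λ‖ = ‖(Λ y)⁻¹ - 1‖ * ‖Λ‖ := by rw [e1]; exact norm_smul ((Λ y)⁻¹ - 1) Λ
    have e3 : |(Λ y)⁻¹ - 1| * Λ y = |((Λ y)⁻¹ - 1) * Λ y| := by
      rw [abs_mul, abs_of_nonneg hΛypos.le]
    rw [e2, Real.norm_eq_abs, hΛnorm, e3, sub_mul, inv_mul_cancel₀ hΛypos.ne', one_mul]
  have habs : |1 - Λ y| < β + ε^2/2 := by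
    rw [abs_lt]
    constructor
    · nlinarith
    · nlinarith
  have hGf : ‖G - f‖ < ε := by
    have h1 : ‖G - f‖ ≤ ‖G - Λ‖ + ‖Λ - f‖ := by
      have e : G - f = (G - Λ) + (Λ - f) := by abel
      rw [e]; exact norm_add_le _ _
    rw [hΛf, hGΛ] at h1
    linarith
  exact ⟨y, G, hymax, hGnorm, hGy, hyx, hGf⟩
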